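/- Let c₁, c₂, c₃ > 0 be real constants and let c₄ ≥ 10(c₁ + c₂ + c₃ + 1). Let n ≥ 2 and 1 ≤ k ≤ n be integers, let A be a real n×n matrix with |A_{i,j}| ≤ n^{c₁} for all i, j, and set B = n^{c₄}. Let Ã be the (n+k−1)×(n+k−1) block-diagonal matrix whose top-left n×n block is A, whose remaining k−1 diagonal entries all equal B, and all of whose other entries are 0. Let 1 ≤ C ≤ n^{c₃} and suppose Â is an (n+k−1)×(n+k−1) real matrix of rank at most k satisfying ‖Â − Ã‖₁ ≤ C·‖A' − Ã‖₁ for every (n+k−1)×(n+k−1) matrix A' of rank at most k. Then there exists j* ∈ {1, …, n} such that, with c ∈ ℝⁿ denoting the vector formed by the first n entries of column j* of Â, for all u, v ∈ ℝⁿ there exists w ∈ ℝⁿ with ‖c wᵀ − A‖₁ ≤ C·‖u vᵀ − A‖₁ + n^{−c₂}. -/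

import Mathlib

open Matrix

/-- The entrywise `ℓ₁` norm of a matrix. -/
noncomputable def l1M {n d : ℕ} (M : Matrix (Fin n) (Fin d) ℝ) : ℝ :=
  ∑ i, ∑ j, |M i j|

set_option maxHeartbeats 2000000
set_option synthInstance.maxHeartbeats 1000000

open Finset Module

lemma sum_split' {N n K : ℕ} (hNK : N = n + K) (f : Fin N → ℝ) :
    ∑ i, f i = (∑ i : Fin n, f ⟨i, by omega⟩) + ∑ t : Fin K, f ⟨n + t, by omega⟩ := by
  subst hNK
  rw [Fin.sum_univ_add]
  congr 1

lemma abs_entry_le_l1M {n d : ℕ} (M : Matrix (Fin n) (Fin d) ℝ) (i : Fin n) (j : Fin d) :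
    |M i j| ≤ ∑ a, ∑ b, |M a b| := by
  calc |M i j| ≤ ∑ b, |M i b| :=
        Finset.single_le_sum (f := fun b => |M i b|) (fun b _ => abs_nonneg _)
          (Finset.mem_univ j)
    _ ≤ ∑ a, ∑ b, |M a b| :=
        Finset.single_le_sum (f := fun a => ∑ b, |M a b|)
          (fun a _ => Finset.sum_nonneg fun b _ => abs_nonneg _) (Finset.mem_univ i)

lemma coef_bound {K N : ℕ} (s : Fin K → Fin N → ℝ) (idx : Fin K → Fin N)
    (B E D : ℝ) (hE : 0 ≤ E) (hD : 0 ≤ D)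
    (hdiag : ∀ t, B - E ≤ |s t (idx t)|)
    (hoff : ∀ t t', t ≠ t' → |s t (idx t')| ≤ E)
    (β : Fin K → ℝ)
    (hv : ∀ t, |∑ t', β t' * s t' (idx t)| ≤ D) :
    ∀ t, |β t| * (B - (K + 1) * E) ≤ D := by
  intro t
  rcases le_or_gt (B - (K + 1) * E) 0 with h0 | h0
  · have : |β t| * (B - (K + 1) * E) ≤ 0 :=
      mul_nonpos_of_nonneg_of_nonpos (abs_nonneg _) h0
    linarith
  obtain ⟨t₀, -, ht₀⟩ := Finset.exists_max_image Finset.univ (fun t' => |β t'|) ⟨t, Finset.mem_univ t⟩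
  have hmax : ∀ t', |β t'| ≤ |β t₀| := fun t' => ht₀ t' (Finset.mem_univ t')
  have key : |β t₀| * (B - (K + 1) * E) ≤ D := by
    have hsum := hv t₀
    rw [← Finset.add_sum_erase Finset.univ _ (Finset.mem_univ t₀)] at hsum
    have h1 : |β t₀ * s t₀ (idx t₀)| ≥ |β t₀| * (B - E) := by
      rw [abs_mul]
      have := hdiag t₀
      nlinarith [abs_nonneg (β t₀)]
    have h2 : |∑ t' ∈ Finset.univ.erase t₀, β t' * s t' (idx t₀)| ≤ K * (|β t₀| * E) := by
      calc |∑ t' ∈ Finset.univ.erase t₀, β t' * s t' (idx t₀)|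
          ≤ ∑ t' ∈ Finset.univ.erase t₀, |β t' * s t' (idx t₀)| :=
            Finset.abs_sum_le_sum_abs _ _
        _ ≤ ∑ _t' ∈ Finset.univ.erase t₀, |β t₀| * E := by
            apply Finset.sum_le_sum
            intro t' ht'
            rw [abs_mul]
            have hne : t' ≠ t₀ := Finset.ne_of_mem_erase ht'
            exact mul_le_mul (hmax t') (hoff t' t₀ hne) (abs_nonneg _) (abs_nonneg _)
        _ = (Finset.univ.erase t₀).card * (|β t₀| * E) := by
            rw [Finset.sum_const, nsmul_eq_mul]
        _ ≤ K * (|β t₀| * E) := by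
            apply mul_le_mul_of_nonneg_right _ (by positivity)
            have : (Finset.univ.erase t₀).card ≤ K := by
              calc (Finset.univ.erase t₀).card ≤ Finset.univ.card := Finset.card_erase_le
                _ = K := by simp
            exact_mod_cast this
    have h3 : |β t₀ * s t₀ (idx t₀)| - |∑ t' ∈ Finset.univ.erase t₀, β t' * s t' (idx t₀)|
        ≤ |β t₀ * s t₀ (idx t₀) + ∑ t' ∈ Finset.univ.erase t₀, β t' * s t' (idx t₀)| := by
      set a := β t₀ * s t₀ (idx t₀) with ha
      set b := ∑ t' ∈ Finset.univ.erase t₀, β t' * s t' (idx t₀) with hb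
      have h := abs_add_le (a + b) (-b)
      rw [abs_neg] at h
      have he : a + b + -b = a := by ring
      rw [he] at h
      linarith
    nlinarith [hmax t, abs_nonneg (β t₀)]
  calc |β t| * (B - (K + 1) * E) ≤ |β t₀| * (B - (K + 1) * E) :=
        mul_le_mul_of_nonneg_right (hmax t) (le_of_lt h0)
    _ ≤ D := key

lemma exists_pivot {N n : ℕ} (hn : 0 < n) (cols : Fin n → (Fin N → ℝ))
    (S W : Submodule ℝ (Fin N → ℝ)) (hSW : S ≤ W) (hcols : ∀ j, cols j ∈ W)
    (hWS : finrank ℝ W ≤ finrank ℝ S + 1) :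
    ∃ j₀ : Fin n, ∀ j, ∃ α : ℝ, |α| ≤ 1 ∧ cols j - α • cols j₀ ∈ S := by
  classical
  set π := S.mkQ with hπ
  set f : W →ₗ[ℝ] ((Fin N → ℝ) ⧸ S) := π.comp W.subtype with hf
  have hker : LinearMap.ker f = S.comap W.subtype := by
    rw [hf, LinearMap.ker_comp, hπ, Submodule.ker_mkQ]
  have hkerrank : finrank ℝ (LinearMap.ker f) = finrank ℝ S := by
    rw [hker]
    exact (Submodule.comapSubtypeEquivOfLe hSW).finrank_eq
  have hrn := LinearMap.finrank_range_add_finrank_ker f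
  have hrange : finrank ℝ (LinearMap.range f) ≤ 1 := by omega
  have hmem : ∀ j, π (cols j) ∈ LinearMap.range f := fun j =>
    ⟨⟨cols j, hcols j⟩, rfl⟩
  obtain ⟨v₀, hv₀⟩ := (finrank_le_one_iff (K := ℝ) (V := LinearMap.range f)).mp hrange
  have hlam : ∀ j, ∃ c : ℝ, c • (v₀ : (Fin N → ℝ) ⧸ S) = π (cols j) := by
    intro j
    obtain ⟨c, hc⟩ := hv₀ ⟨π (cols j), hmem j⟩
    exact ⟨c, by
      have := congrArg (Subtype.val) hc
      simpa using this⟩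
  choose lam hlamspec using hlam
  obtain ⟨j₀, -, hj₀⟩ := Finset.exists_max_image Finset.univ (fun j => |lam j|)
    ⟨⟨0, hn⟩, Finset.mem_univ _⟩
  refine ⟨j₀, fun j => ?_⟩
  by_cases hz : lam j₀ = 0
  · have hlj : lam j = 0 := by
      have := hj₀ j (Finset.mem_univ j)
      rw [hz] at this
      simpa using abs_eq_zero.mp (le_antisymm (by simpa using this) (abs_nonneg _))
    refine ⟨0, by norm_num, ?_⟩
    have : π (cols j) = 0 := by rw [← hlamspec j, hlj, zero_smul]
    have hm : cols j ∈ S := by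
      rw [hπ, Submodule.mkQ_apply, Submodule.Quotient.mk_eq_zero] at this
      exact this
    simpa using hm
  · refine ⟨lam j / lam j₀, ?_, ?_⟩
    · rw [abs_div]
      rw [div_le_one (abs_pos.mpr hz)]
      exact hj₀ j (Finset.mem_univ j)
    · have : π (cols j - (lam j / lam j₀) • cols j₀) = 0 := by
        rw [map_sub, _root_.map_smul, ← hlamspec j, ← hlamspec j₀, smul_smul,
          div_mul_cancel₀ _ hz, sub_self]
      rwa [hπ, Submodule.mkQ_apply, Submodule.Quotient.mk_eq_zero] at this

lemma rank_le_of_cols_in_span {N k : ℕ} (M : Matrix (Fin N) (Fin N) ℝ)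
    (g : Fin k → (Fin N → ℝ))
    (h : ∀ j, Mᵀ j ∈ Submodule.span ℝ (Set.range g)) : M.rank ≤ k := by
  classical
  rw [Matrix.rank_eq_finrank_span_cols]
  have hle : Submodule.span ℝ (Set.range Mᵀ) ≤ Submodule.span ℝ (Set.range g) := by
    rw [Submodule.span_le]
    rintro x ⟨j, rfl⟩
    exact h j
  calc finrank ℝ (Submodule.span ℝ (Set.range Mᵀ))
      ≤ finrank ℝ (Submodule.span ℝ (Set.range g)) := Submodule.finrank_mono hle
    _ ≤ (Set.range g).toFinset.card := finrank_span_le_card _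
    _ ≤ k := by
        rw [Set.toFinset_range]
        exact (Finset.card_image_le).trans (by simp)

lemma sum_split2 {N n K : ℕ} (hNK : N = n + K) (lo : Fin n → Fin N) (hix : Fin K → Fin N)
    (hlo : ∀ i, (lo i : ℕ) = i) (hhi : ∀ t, (hix t : ℕ) = n + t) (f : Fin N → ℝ) :
    ∑ i, f i = (∑ i, f (lo i)) + ∑ t, f (hix t) := by
  rw [sum_split' hNK f]
  congr 1
  · exact Finset.sum_congr rfl fun i _ => by congr 1; exact Fin.ext (by simp [hlo])
  · exact Finset.sum_congr rfl fun t _ => by congr 1; exact Fin.ext (by simp [hhi])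

/-- Reducing the rank-`k` case to the rank-`1` case: if `Ã` is the block diagonal matrix with
top-left `n × n` block `A` (entries bounded by `n^{c₁}`) and `k − 1` additional diagonal entries
equal to `B = n^{c₄}`, and `Â` is a rank-`k` `C`-approximation to `Ã` in entrywise `ℓ₁` norm,
then the first `n` entries of some column `j*` of `Â` give a rank-`1` `C`-approximation to `A`
up to additive error `n^{−c₂}`. -/
theorem rank_k_to_rank_one_reduction (c₁ c₂ c₃ c₄ : ℝ)
    (hc₁ : 0 < c₁) (hc₂ : 0 < c₂) (hc₃ : 0 < c₃)
    (hc₄ : 10 * (c₁ + c₂ + c₃ + 1) ≤ c₄)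
    (n k : ℕ) (hn : 2 ≤ n) (hk1 : 1 ≤ k) (hkn : k ≤ n)
    (A : Matrix (Fin n) (Fin n) ℝ)
    (hA : ∀ i j, |A i j| ≤ (n : ℝ) ^ c₁)
    (Atil : Matrix (Fin (n + k - 1)) (Fin (n + k - 1)) ℝ)
    (hblock_top : ∀ (i j : Fin (n + k - 1)) (hi : (i : ℕ) < n) (hj : (j : ℕ) < n),
      Atil i j = A ⟨i, hi⟩ ⟨j, hj⟩)
    (hblock_diag : ∀ i : Fin (n + k - 1), n ≤ (i : ℕ) → Atil i i = (n : ℝ) ^ c₄)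
    (hblock_zero : ∀ i j : Fin (n + k - 1), i ≠ j → (n ≤ (i : ℕ) ∨ n ≤ (j : ℕ)) →
      Atil i j = 0)
    (C : ℝ) (hC1 : 1 ≤ C) (hC2 : C ≤ (n : ℝ) ^ c₃)
    (Ahat : Matrix (Fin (n + k - 1)) (Fin (n + k - 1)) ℝ)
    (hrank : Ahat.rank ≤ k)
    (happrox : ∀ A' : Matrix (Fin (n + k - 1)) (Fin (n + k - 1)) ℝ, A'.rank ≤ k →
      l1M (Ahat - Atil) ≤ C * l1M (A' - Atil)) :
    ∃ jstar : Fin n, ∀ u v : Fin n → ℝ, ∃ w : Fin n → ℝ,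
      (∑ i : Fin n, ∑ j : Fin n,
          |Ahat (Fin.castLE (by omega) i) (Fin.castLE (by omega) jstar) * w j - A i j|) ≤
        C * (∑ i : Fin n, ∑ j : Fin n, |u i * v j - A i j|) + (n : ℝ) ^ (-c₂) := by

  classical
  set K := k - 1 with hKdef
  have hNK : n + k - 1 = n + K := by omega
  have hn0 : (0:ℝ) < (n:ℝ) := by exact_mod_cast (by omega : 0 < n)
  have hn1 : (1:ℝ) < (n:ℝ) := by exact_mod_cast (by omega : 1 < n)
  have hn2 : (2:ℝ) ≤ (n:ℝ) := by exact_mod_cast hn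
  set B := (n:ℝ) ^ c₄ with hBdef
  set E₀ := (n:ℝ) ^ (c₁ + c₃ + 2) with hE₀def
  have hB0 : (0:ℝ) < B := Real.rpow_pos_of_pos hn0 _
  have hE₀0 : (0:ℝ) < E₀ := Real.rpow_pos_of_pos hn0 _
  have hnN : n ≤ n + k - 1 := by omega
  set lo : Fin n → Fin (n + k - 1) := Fin.castLE hnN with hlodef
  set hix : Fin K → Fin (n + k - 1) := fun t => ⟨n + t.1, by have := t.isLt; omega⟩
    with hhixdef
  have hlo : ∀ i : Fin n, ((lo i : ℕ)) = i := fun i => rfl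
  have hhi : ∀ t : Fin K, ((hix t : ℕ)) = n + t := fun t => rfl
  set ε := l1M (Ahat - Atil) with hεdef
  have hεsum : ε = ∑ a, ∑ b, |Ahat a b - Atil a b| := by
    rw [hεdef]; simp [l1M, Matrix.sub_apply]
  have hε0 : 0 ≤ ε := by
    rw [hεsum]; positivity
  have hent : ∀ i j, |Ahat i j - Atil i j| ≤ ε := by
    intro i j
    have h := abs_entry_le_l1M (Ahat - Atil) i j
    simp only [Matrix.sub_apply] at h
    rw [hεsum]; exact h
  -- Step A: the approximation bound for each rank-one candidate
  have happrox' : ∀ u v : Fin n → ℝ,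
      ε ≤ C * ∑ i : Fin n, ∑ j : Fin n, |u i * v j - A i j| := by
    intro u v
    set ue : Fin (n + k - 1) → ℝ := fun i => if h : (i:ℕ) < n then u ⟨i, h⟩ else 0 with hue
    set ve : Fin (n + k - 1) → ℝ := fun i => if h : (i:ℕ) < n then v ⟨i, h⟩ else 0 with hve
    set A' : Matrix (Fin (n + k - 1)) (Fin (n + k - 1)) ℝ :=
      Matrix.of (fun i j => ue i * ve j + (if i = j ∧ n ≤ (i:ℕ) then B else 0)) with hA'
    have hrankA' : A'.rank ≤ k := by
      apply rank_le_of_cols_in_span A' (fun t : Fin k =>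
        if ht : (t:ℕ) < K then Pi.single (hix ⟨t, ht⟩) (1:ℝ) else ue)
      intro j
      by_cases hj : (j:ℕ) < n
      · have hcol : A'ᵀ j = ve j • ue := by
          funext i
          simp only [Matrix.transpose_apply, hA', Matrix.of_apply, Pi.smul_apply, smul_eq_mul]
          have hno : ¬ (i = j ∧ n ≤ (i:ℕ)) := by
            rintro ⟨rfl, h⟩; omega
          rw [if_neg hno]; ring
        rw [hcol]
        apply Submodule.smul_mem
        apply Submodule.subset_span
        refine ⟨⟨K, by omega⟩, ?_⟩
        have : ¬ ((⟨K, by omega⟩ : Fin k) : ℕ) < K := by simp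
        simp only [dif_neg this]
      · have hvej : ve j = 0 := by rw [hve]; exact dif_neg hj
        have hcol : A'ᵀ j = B • (Pi.single j (1:ℝ) : Fin (n + k - 1) → ℝ) := by
          funext i
          simp only [Matrix.transpose_apply, hA', Matrix.of_apply, Pi.smul_apply, smul_eq_mul,
            hvej, mul_zero, zero_add]
          by_cases hij : i = j
          · subst hij
            rw [if_pos ⟨rfl, by omega⟩, Pi.single_eq_same]; ring
          · rw [if_neg (by tauto), Pi.single_eq_of_ne hij]; ring
        rw [hcol]
        apply Submodule.smul_mem
        apply Submodule.subset_span
        have hjlt : (j:ℕ) - n < K := by have := j.isLt; omega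
        refine ⟨⟨(j:ℕ) - n, by omega⟩, ?_⟩
        beta_reduce
        rw [dif_pos hjlt]
        refine congrArg (fun x => (Pi.single x (1:ℝ) : Fin (n + k - 1) → ℝ)) (Fin.ext ?_)
        rw [hhi]
        show n + ((j:ℕ) - n) = (j:ℕ)
        omega
    have hl1 : l1M (A' - Atil) = ∑ i : Fin n, ∑ j : Fin n, |u i * v j - A i j| := by
      have h1 : l1M (A' - Atil)
          = ∑ i : Fin (n + k - 1), ∑ j : Fin (n + k - 1), |A' i j - Atil i j| := by
        simp [l1M, Matrix.sub_apply]
      rw [h1, sum_split2 hNK lo hix hlo hhi (fun a => ∑ b, |A' a b - Atil a b|)]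
      have hhigh : ∀ t : Fin K, ∑ b, |A' (hix t) b - Atil (hix t) b| = 0 := by
        intro t
        apply Finset.sum_eq_zero
        intro b _
        rw [abs_eq_zero, sub_eq_zero]
        have hcn : ¬ ((hix t : Fin (n + k - 1)) : ℕ) < n := by rw [hhi]; omega
        have huet : ue (hix t) = 0 := by
          simp only [hue]; rw [dif_neg hcn]
        by_cases hb : hix t = b
        · subst hb
          have h1 : A' (hix t) (hix t) = B := by
            simp only [hA', Matrix.of_apply, huet, zero_mul, zero_add]
            simp
            intro h; exact absurd h hcn
          rw [h1, hblock_diag (hix t) (by omega)]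
        · have h1 : A' (hix t) b = 0 := by
            have hcond : ¬ (hix t = b ∧ n ≤ n + (t:ℕ)) := by
              rintro ⟨h, -⟩; exact hb h
            simp only [hA', Matrix.of_apply, huet, zero_mul, zero_add]
            rw [if_neg hcond]
          rw [h1, hblock_zero (hix t) b hb (Or.inl (by omega))]
      have hrow : ∀ i : Fin n, ∑ b, |A' (lo i) b - Atil (lo i) b|
          = ∑ j : Fin n, |u i * v j - A i j| := by
        intro i
        rw [sum_split2 hNK lo hix hlo hhi (fun b => |A' (lo i) b - Atil (lo i) b|)]
        have hzero : ∀ t : Fin K, |A' (lo i) (hix t) - Atil (lo i) (hix t)| = 0 := by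
          intro t
          rw [abs_eq_zero, sub_eq_zero]
          have hne : lo i ≠ hix t := by
            intro hcon
            have := congrArg Fin.val hcon
            rw [hlo, hhi] at this
            have := i.isLt; omega
          have h1 : A' (lo i) (hix t) = 0 := by
            have hcn : ¬ ((hix t : Fin (n + k - 1)) : ℕ) < n := by rw [hhi]; omega
            have hvet : ve (hix t) = 0 := by
              simp only [hve]; rw [dif_neg hcn]
            have hcond : ¬ (lo i = hix t ∧ n ≤ ((lo i : Fin (n + k - 1)) : ℕ)) := by
              rintro ⟨h, -⟩; exact hne h
            simp only [hA', Matrix.of_apply, hvet, mul_zero, zero_add]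
            rw [if_neg hcond]
          rw [h1, hblock_zero (lo i) (hix t) hne (Or.inr (by rw [hhi]; omega))]
        rw [Finset.sum_eq_zero fun t _ => hzero t, add_zero]
        apply Finset.sum_congr rfl
        intro j _
        have h1 : A' (lo i) (lo j) = u i * v j := by
          have hno : ¬ (lo i = lo j ∧ n ≤ ((lo i : Fin (n+k-1)) : ℕ)) := by
            rintro ⟨-, h⟩; rw [hlo] at h; have := i.isLt; omega
          have hci : ((lo i : Fin (n + k - 1)) : ℕ) < n := by rw [hlo]; exact i.isLt
          have hcj : ((lo j : Fin (n + k - 1)) : ℕ) < n := by rw [hlo]; exact j.isLt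
          have hu : ue (lo i) = u i := by
            simp only [hue]; rw [dif_pos hci]
            exact congrArg u (Fin.ext (hlo i))
          have hv : ve (lo j) = v j := by
            simp only [hve]; rw [dif_pos hcj]
            exact congrArg v (Fin.ext (hlo j))
          simp only [hA', Matrix.of_apply, hu, hv]
          rw [if_neg hno, add_zero]
        have h2 : Atil (lo i) (lo j) = A i j := by
          rw [hblock_top (lo i) (lo j) (by rw [hlo]; exact i.isLt) (by rw [hlo]; exact j.isLt)]
          simp only [hlo, Fin.eta]
        rw [h1, h2]
      rw [Finset.sum_eq_zero fun t _ => hhigh t, add_zero]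
      exact Finset.sum_congr rfl fun i _ => hrow i
    calc ε ≤ C * l1M (A' - Atil) := happrox A' hrankA'
      _ = C * ∑ i : Fin n, ∑ j : Fin n, |u i * v j - A i j| := by rw [hl1]
  -- Step B : ε ≤ E₀
  have hεE : ε ≤ E₀ := by
    have h00 := happrox' (fun _ => 0) (fun _ => 0)
    have hs : ∑ i : Fin n, ∑ j : Fin n, |(0:ℝ) * 0 - A i j|
        ≤ (n:ℝ) * ((n:ℝ) * (n:ℝ) ^ c₁) := by
      calc ∑ i : Fin n, ∑ j : Fin n, |(0:ℝ) * 0 - A i j|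
          ≤ ∑ _i : Fin n, ((n:ℝ) * (n:ℝ) ^ c₁) := by
            apply Finset.sum_le_sum
            intro i _
            calc ∑ j : Fin n, |(0:ℝ) * 0 - A i j| = ∑ j : Fin n, |A i j| := by
                  apply Finset.sum_congr rfl
                  intro j _
                  rw [zero_mul, zero_sub, abs_neg]
              _ ≤ ∑ _j : Fin n, (n:ℝ) ^ c₁ := Finset.sum_le_sum fun j _ => hA i j
              _ = (n:ℝ) * (n:ℝ) ^ c₁ := by
                  rw [Finset.sum_const, Finset.card_univ, Fintype.card_fin, nsmul_eq_mul]
        _ = (n:ℝ) * ((n:ℝ) * (n:ℝ) ^ c₁) := by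
            rw [Finset.sum_const, Finset.card_univ, Fintype.card_fin, nsmul_eq_mul]
    have heq : (n:ℝ) ^ c₃ * ((n:ℝ) * ((n:ℝ) * (n:ℝ) ^ c₁)) = E₀ := by
      rw [hE₀def]
      rw [show c₁ + c₃ + 2 = (c₁ + 1 + 1) + c₃ by ring, Real.rpow_add hn0,
        Real.rpow_add_one hn0.ne', Real.rpow_add_one hn0.ne']
      ring
    calc ε ≤ C * ∑ i : Fin n, ∑ j : Fin n, |(0:ℝ) * 0 - A i j| := h00
      _ ≤ (n:ℝ) ^ c₃ * ((n:ℝ) * ((n:ℝ) * (n:ℝ) ^ c₁)) := by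
          apply mul_le_mul hC2 hs (by positivity) (by positivity)
      _ = E₀ := heq
  -- numeric bound : (K+1) E₀ ≤ B/2
  have hK1n : (K:ℝ) + 1 ≤ (n:ℝ) := by exact_mod_cast (by omega : K + 1 ≤ n)
  have hhalf : ((K:ℝ) + 1) * E₀ ≤ B / 2 := by
    have h1 : ((K:ℝ) + 1) * E₀ ≤ (n:ℝ) * E₀ := mul_le_mul_of_nonneg_right hK1n hE₀0.le
    have h2 : (n:ℝ) * E₀ = (n:ℝ) ^ (c₁ + c₃ + 3) := by
      rw [hE₀def, show c₁ + c₃ + 3 = (c₁ + c₃ + 2) + 1 by ring,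
        Real.rpow_add_one hn0.ne']
      ring
    have h3 : (n:ℝ) ^ (c₁ + c₃ + 3) ≤ (n:ℝ) ^ (c₄ - 1) :=
      Real.rpow_le_rpow_of_exponent_le hn1.le (by linarith)
    have h4 : (n:ℝ) ^ (c₄ - 1) = B / (n:ℝ) := by
      rw [hBdef, Real.rpow_sub hn0, Real.rpow_one]
    have h5 : B / (n:ℝ) ≤ B / 2 := by
      apply div_le_div_of_nonneg_left hB0.le (by norm_num) hn2
    linarith
  have hB2 : (0:ℝ) < B / 2 := by positivity
  have hdenom : B / 2 ≤ B - ((K:ℝ) + 1) * E₀ := by linarith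
  -- the special columns
  set s : Fin K → (Fin (n + k - 1) → ℝ) := fun t => fun i => Ahat i (hix t) with hsdef
  have hsdiag : ∀ t, B - E₀ ≤ |s t (hix t)| := by
    intro t
    have h := hent (hix t) (hix t)
    rw [hblock_diag (hix t) (by rw [hhi]; omega)] at h
    have h1 : B - ε ≤ Ahat (hix t) (hix t) := by
      have := abs_le.mp h
      linarith [this.1]
    calc B - E₀ ≤ B - ε := by linarith
      _ ≤ Ahat (hix t) (hix t) := h1
      _ ≤ |Ahat (hix t) (hix t)| := le_abs_self _
  have hhixinj : ∀ t t' : Fin K, t ≠ t' → hix t ≠ hix t' := by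
    intro t t' hne hcon
    apply hne
    have := congrArg Fin.val hcon
    rw [hhi, hhi] at this
    exact Fin.ext (by omega)
  have hsoff : ∀ t t', t ≠ t' → |s t (hix t')| ≤ E₀ := by
    intro t t' hne
    have h0 := hblock_zero (hix t') (hix t) (hhixinj t' t (fun h => hne h.symm))
      (Or.inl (by rw [hhi]; omega))
    have h := hent (hix t') (hix t)
    rw [h0, sub_zero] at h
    exact h.trans hεE
  have hslow : ∀ t (i : Fin n), |s t (lo i)| ≤ E₀ := by
    intro t i
    have hne : lo i ≠ hix t := by
      intro hcon
      have := congrArg Fin.val hcon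
      rw [hlo, hhi] at this
      have := i.isLt; omega
    have h0 := hblock_zero (lo i) (hix t) hne (Or.inr (by rw [hhi]; omega))
    have h := hent (lo i) (hix t)
    rw [h0, sub_zero] at h
    exact h.trans hεE
  have htoplow : ∀ t (j : Fin n), |Ahat (hix t) (lo j)| ≤ E₀ := by
    intro t j
    have hne : hix t ≠ lo j := by
      intro hcon
      have := congrArg Fin.val hcon
      rw [hlo, hhi] at this
      have := j.isLt; omega
    have h0 := hblock_zero (hix t) (lo j) hne (Or.inl (by rw [hhi]; omega))
    have h := hent (hix t) (lo j)
    rw [h0, sub_zero] at h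
    exact h.trans hεE
  have hposfac : (0:ℝ) < B - ((K:ℝ) + 1) * E₀ := lt_of_lt_of_le hB2 hdenom
  -- linear independence of the special columns
  have hindep : LinearIndependent ℝ s := by
    rw [Fintype.linearIndependent_iff]
    intro g hg t
    have hv : ∀ t₀, |∑ t', g t' * s t' (hix t₀)| ≤ 0 := by
      intro t₀
      have h := congrFun hg (hix t₀)
      simp only [Finset.sum_apply, Pi.smul_apply, smul_eq_mul, Pi.zero_apply] at h
      rw [h, abs_zero]
    have hb := coef_bound s hix B E₀ 0 hE₀0.le le_rfl hsdiag hsoff g hv t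
    have habs : |g t| ≤ 0 := by
      by_contra hcon
      push_neg at hcon
      nlinarith
    exact abs_eq_zero.mp (le_antisymm habs (abs_nonneg _))
  -- the span spaces
  set W := Submodule.span ℝ (Set.range Ahatᵀ) with hWdef
  have hfinW : finrank ℝ W ≤ k := by
    rw [hWdef]
    rw [Matrix.rank_eq_finrank_span_cols] at hrank
    exact hrank
  have hsW : ∀ t, s t ∈ W := by
    intro t
    apply Submodule.subset_span
    exact ⟨hix t, rfl⟩
  set S := Submodule.span ℝ (Set.range s) with hSdef
  have hSW : S ≤ W := by
    rw [hSdef, Submodule.span_le]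
    rintro x ⟨t, rfl⟩
    exact hsW t
  have hfinS : finrank ℝ S = K := by
    rw [hSdef, finrank_span_eq_card hindep, Fintype.card_fin]
  have hWS : finrank ℝ W ≤ finrank ℝ S + 1 := by
    rw [hfinS]; omega
  set cols : Fin n → (Fin (n + k - 1) → ℝ) := fun j => fun i => Ahat i (lo j) with hcolsdef
  have hcolsW : ∀ j, cols j ∈ W := by
    intro j
    apply Submodule.subset_span
    exact ⟨lo j, rfl⟩
  obtain ⟨j₀, hpiv⟩ := exists_pivot (by omega : 0 < n) cols S W hSW hcolsW hWS
  choose α hα1 hα2 using hpiv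
  -- the pointwise bound on the residual
  have hvlow : ∀ (j : Fin n) (i : Fin n),
      |cols j (lo i) - α j * cols j₀ (lo i)| ≤ (K:ℝ) * (4 * E₀ / B * E₀) := by
    intro j i
    have hmem : cols j - α j • cols j₀ ∈ Submodule.span ℝ (Set.range s) := by
      rw [← hSdef]; exact hα2 j
    obtain ⟨β, hβ⟩ := (Submodule.mem_span_range_iff_exists_fun ℝ).mp hmem
    have hDb : ∀ t, |∑ t', β t' * s t' (hix t)| ≤ 2 * E₀ := by
      intro t
      have heval : ∑ t', β t' * s t' (hix t) = cols j (hix t) - α j * cols j₀ (hix t) := by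
        have h := congrFun hβ (hix t)
        simpa [Finset.sum_apply, Pi.smul_apply, Pi.sub_apply, smul_eq_mul] using h
      rw [heval]
      have h1 : |cols j (hix t)| ≤ E₀ := htoplow t j
      have h2 : |cols j₀ (hix t)| ≤ E₀ := htoplow t j₀
      calc |cols j (hix t) - α j * cols j₀ (hix t)|
          ≤ |cols j (hix t)| + |α j * cols j₀ (hix t)| := abs_sub _ _
        _ = |cols j (hix t)| + |α j| * |cols j₀ (hix t)| := by rw [abs_mul]
        _ ≤ E₀ + 1 * E₀ := by
            apply add_le_add h1
            exact mul_le_mul (hα1 j) h2 (abs_nonneg _) (by norm_num)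
        _ = 2 * E₀ := by ring
    have hβb : ∀ t, |β t| ≤ 4 * E₀ / B := by
      intro t
      have hb := coef_bound s hix B E₀ (2 * E₀) hE₀0.le (by positivity) hsdiag hsoff β hDb t
      have h1 : |β t| * (B / 2) ≤ 2 * E₀ :=
        le_trans (mul_le_mul_of_nonneg_left hdenom (abs_nonneg _)) hb
      have h2 : |β t| ≤ 2 * E₀ / (B / 2) := (le_div_iff₀ hB2).mpr h1
      have h3 : 2 * E₀ / (B / 2) = 4 * E₀ / B := by
        field_simp
        ring
      rwa [h3] at h2
    have heval2 : cols j (lo i) - α j * cols j₀ (lo i) = ∑ t', β t' * s t' (lo i) := by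
      have h := congrFun hβ (lo i)
      simp only [Finset.sum_apply, Pi.smul_apply, Pi.sub_apply, smul_eq_mul] at h
      exact h.symm
    rw [heval2]
    calc |∑ t', β t' * s t' (lo i)| ≤ ∑ t', |β t' * s t' (lo i)| :=
          Finset.abs_sum_le_sum_abs _ _
      _ ≤ ∑ _t' : Fin K, (4 * E₀ / B) * E₀ := by
          apply Finset.sum_le_sum
          intro t' _
          rw [abs_mul]
          exact mul_le_mul (hβb t') (hslow t' i) (abs_nonneg _) (by positivity)
      _ = (K:ℝ) * (4 * E₀ / B * E₀) := by
          rw [Finset.sum_const, Finset.card_univ, Fintype.card_fin, nsmul_eq_mul]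
  -- the top block error is at most ε
  have hblocksum : (∑ i : Fin n, ∑ j : Fin n, |Ahat (lo i) (lo j) - Atil (lo i) (lo j)|) ≤ ε := by
    have hinner : ∀ i : Fin n, ∑ j : Fin n, |Ahat (lo i) (lo j) - Atil (lo i) (lo j)|
        ≤ ∑ b, |Ahat (lo i) b - Atil (lo i) b| := by
      intro i
      rw [sum_split2 hNK lo hix hlo hhi (fun b => |Ahat (lo i) b - Atil (lo i) b|)]
      have h0 : (0:ℝ) ≤ ∑ t : Fin K, |Ahat (lo i) (hix t) - Atil (lo i) (hix t)| := by
        positivity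
      linarith
    calc (∑ i : Fin n, ∑ j : Fin n, |Ahat (lo i) (lo j) - Atil (lo i) (lo j)|)
        ≤ ∑ i : Fin n, ∑ b, |Ahat (lo i) b - Atil (lo i) b| :=
          Finset.sum_le_sum fun i _ => hinner i
      _ ≤ ε := by
          rw [hεsum, sum_split2 hNK lo hix hlo hhi (fun a => ∑ b, |Ahat a b - Atil a b|)]
          have h0 : (0:ℝ) ≤ ∑ t : Fin K, ∑ b, |Ahat (hix t) b - Atil (hix t) b| := by
            positivity
          linarith
  -- total additive error bound
  have hT : (n:ℝ) * ((n:ℝ) * ((K:ℝ) * (4 * E₀ / B * E₀))) ≤ (n:ℝ) ^ (-c₂) := by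
    have hKn : (K:ℝ) ≤ (n:ℝ) := by exact_mod_cast (by omega : K ≤ n)
    have h4 : (4:ℝ) ≤ (n:ℝ) * (n:ℝ) := by nlinarith
    have step1 : (n:ℝ) * ((n:ℝ) * ((K:ℝ) * (4 * E₀ / B * E₀)))
        ≤ (n:ℝ) * ((n:ℝ) * ((n:ℝ) * (((n:ℝ) * (n:ℝ)) * E₀ / B * E₀))) := by
      gcongr
    have step2 : (n:ℝ) * ((n:ℝ) * ((n:ℝ) * (((n:ℝ) * (n:ℝ)) * E₀ / B * E₀)))
        = (n:ℝ) ^ (2 * c₁ + 2 * c₃ + 9 - c₄) := by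
      have h5 : (n:ℝ) * (n:ℝ) * (n:ℝ) * ((n:ℝ) * (n:ℝ)) = (n:ℝ) ^ ((5:ℕ):ℝ) := by
        rw [Real.rpow_natCast]
        ring
      have hB' : B⁻¹ = (n:ℝ) ^ (-c₄) := by
        rw [hBdef, ← Real.rpow_neg hn0.le]
      calc (n:ℝ) * ((n:ℝ) * ((n:ℝ) * (((n:ℝ) * (n:ℝ)) * E₀ / B * E₀)))
          = ((n:ℝ) * (n:ℝ) * (n:ℝ) * ((n:ℝ) * (n:ℝ))) * E₀ * E₀ * B⁻¹ := by
            field_simp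
        _ = (n:ℝ) ^ ((5:ℕ):ℝ) * E₀ * E₀ * (n:ℝ) ^ (-c₄) := by rw [h5, hB']
        _ = (n:ℝ) ^ (2 * c₁ + 2 * c₃ + 9 - c₄) := by
            rw [hE₀def, ← Real.rpow_add hn0, ← Real.rpow_add hn0, ← Real.rpow_add hn0]
            congr 1
            push_cast
            ring
    have step3 : (n:ℝ) ^ (2 * c₁ + 2 * c₃ + 9 - c₄) ≤ (n:ℝ) ^ (-c₂) :=
      Real.rpow_le_rpow_of_exponent_le hn1.le (by linarith)
    calc (n:ℝ) * ((n:ℝ) * ((K:ℝ) * (4 * E₀ / B * E₀))) ≤ _ := step1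
      _ = (n:ℝ) ^ (2 * c₁ + 2 * c₃ + 9 - c₄) := step2
      _ ≤ (n:ℝ) ^ (-c₂) := step3
  -- final assembly
  refine ⟨j₀, fun u v => ⟨α, ?_⟩⟩
  have hptwise : ∀ (i j : Fin n),
      |Ahat (lo i) (lo j₀) * α j - A i j|
        ≤ |Ahat (lo i) (lo j) - Atil (lo i) (lo j)|
          + |cols j (lo i) - α j * cols j₀ (lo i)| := by
    intro i j
    have hAt : Atil (lo i) (lo j) = A i j := by
      rw [hblock_top (lo i) (lo j) (by rw [hlo]; exact i.isLt) (by rw [hlo]; exact j.isLt)]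
      simp only [hlo, Fin.eta]
    have hrw : Ahat (lo i) (lo j₀) * α j - A i j
        = (Ahat (lo i) (lo j) - Atil (lo i) (lo j))
          - (cols j (lo i) - α j * cols j₀ (lo i)) := by
      rw [hAt]
      show Ahat (lo i) (lo j₀) * α j - A i j
        = (Ahat (lo i) (lo j) - A i j) - (Ahat (lo i) (lo j) - α j * Ahat (lo i) (lo j₀))
      ring
    rw [hrw]
    exact abs_sub _ _
  show (∑ i : Fin n, ∑ j : Fin n, |Ahat (lo i) (lo j₀) * α j - A i j|)
      ≤ C * (∑ i : Fin n, ∑ j : Fin n, |u i * v j - A i j|) + (n : ℝ) ^ (-c₂)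
  calc (∑ i : Fin n, ∑ j : Fin n, |Ahat (lo i) (lo j₀) * α j - A i j|)
      ≤ ∑ i : Fin n, ∑ j : Fin n,
          (|Ahat (lo i) (lo j) - Atil (lo i) (lo j)|
            + |cols j (lo i) - α j * cols j₀ (lo i)|) :=
        Finset.sum_le_sum fun i _ => Finset.sum_le_sum fun j _ => hptwise i j
    _ = (∑ i : Fin n, ∑ j : Fin n, |Ahat (lo i) (lo j) - Atil (lo i) (lo j)|)
        + ∑ i : Fin n, ∑ j : Fin n, |cols j (lo i) - α j * cols j₀ (lo i)| := by
        rw [← Finset.sum_add_distrib]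
        exact Finset.sum_congr rfl fun i _ => Finset.sum_add_distrib
    _ ≤ ε + (n:ℝ) * ((n:ℝ) * ((K:ℝ) * (4 * E₀ / B * E₀))) := by
        apply add_le_add hblocksum
        calc ∑ i : Fin n, ∑ j : Fin n, |cols j (lo i) - α j * cols j₀ (lo i)|
            ≤ ∑ _i : Fin n, ∑ _j : Fin n, (K:ℝ) * (4 * E₀ / B * E₀) :=
              Finset.sum_le_sum fun i _ => Finset.sum_le_sum fun j _ => hvlow j i
          _ = (n:ℝ) * ((n:ℝ) * ((K:ℝ) * (4 * E₀ / B * E₀))) := by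
              simp [Finset.sum_const, Finset.card_univ, Fintype.card_fin, nsmul_eq_mul]
    _ ≤ C * (∑ i : Fin n, ∑ j : Fin n, |u i * v j - A i j|) + (n : ℝ) ^ (-c₂) :=
        add_le_add (happrox' u v) hT
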